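/- Every invertible skew-symmetric real 2L×2L matrix A can be brought into canonical block form by an orthogonal matrix: there exist an orthogonal matrix V ∈ O(2L) and a diagonal matrix E with strictly positive diagonal entries such that V A Vᵀ equals the block matrix [[0, E], [-E, 0]]. -/

import Mathlib

open Matrix

open Module Submodule
open scoped RealInnerProductSpace

open scoped RealInnerProductSpace

lemma skew_key {E : Type} [NormedAddCommGroup E] [InnerProductSpace ℝ E]
    [FiniteDimensional ℝ E]
    (T : E →ₗ[ℝ] E) (hT : ∀ x y : E, ⟪T x, y⟫ = -⟪x, T y⟫)
    (hinj : ∀ x : E, T x = 0 → x = 0) :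
    ∀ (n : ℕ) (W : Submodule ℝ E), finrank ℝ W = n → (∀ x ∈ W, T x ∈ W) →
    ∃ (m : ℕ) (e : Fin m → ℝ) (v w : Fin m → E),
      (∀ i, 0 < e i) ∧
      Orthonormal ℝ (Sum.elim v w) ∧
      (∀ i, T (v i) = -(e i) • w i) ∧ (∀ i, T (w i) = e i • v i) ∧
      Submodule.span ℝ (Set.range (Sum.elim v w)) = W := by
  intro n
  induction n using Nat.strong_induction_on with
  | _ n IH =>
    intro W hrank hWinv
    rcases eq_or_ne W ⊥ with rfl | hW0
    · refine ⟨0, finZeroElim, finZeroElim, finZeroElim, fun i => i.elim0, ?_, fun i => i.elim0,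
        fun i => i.elim0, ?_⟩
      · rw [orthonormal_iff_ite]
        rintro (i | i) _ <;> exact i.elim0
      · have : Set.range (Sum.elim (finZeroElim : Fin 0 → E) finZeroElim) = ∅ := by
          ext x; simp only [Set.mem_range, Set.mem_empty_iff_false, iff_false]
          rintro ⟨(i | i), -⟩ <;> exact i.elim0
        rw [this, Submodule.span_empty]
    · -- get an eigenvector of S = -(T∘T) restricted to W
      have hn0 : 0 < n := by
        rw [← hrank]
        exact Module.finrank_pos_iff.mpr (Submodule.nontrivial_iff_ne_bot.mpr hW0)
      set T' : W →ₗ[ℝ] W := T.restrict hWinv with hT'def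
      set S : W →ₗ[ℝ] W := -(T' ∘ₗ T') with hSdef
      have hScoe : ∀ x : W, (S x : E) = -(T (T x)) := by
        intro x
        simp [hSdef, hT'def, LinearMap.restrict_coe_apply]
      have hS : S.IsSymmetric := by
        intro x y
        rw [Submodule.coe_inner, Submodule.coe_inner, hScoe, hScoe,
          inner_neg_left, inner_neg_right, hT (T (x : E)) (y : E), neg_neg,
          ← hT (x : E) (T (y : E))]
      have hrank' : finrank ℝ W = n := hrank
      obtain ⟨u, hu, hunorm⟩ : ∃ u : W, S u = (hS.eigenvalues hrank' ⟨0, hn0⟩ : ℝ) • u ∧ ‖u‖ = 1 :=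
        ⟨hS.eigenvectorBasis hrank' ⟨0, hn0⟩, hS.apply_eigenvectorBasis hrank' ⟨0, hn0⟩,
          (hS.eigenvectorBasis hrank').orthonormal.1 ⟨0, hn0⟩⟩
      set μ : ℝ := hS.eigenvalues hrank' ⟨0, hn0⟩ with hμdef
      set v0 : E := (u : E) with hv0def
      have hv0W : v0 ∈ W := u.2
      have hv0norm : ⟪v0, v0⟫ = 1 := by
        rw [real_inner_self_eq_norm_sq]
        rw [show ‖v0‖ = 1 from hunorm]; norm_num
      have hv0ne : v0 ≠ 0 := by
        intro h; rw [h] at hv0norm; simp at hv0norm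
      have hTTv0 : T (T v0) = -(μ • v0) := by
        have := congrArg (Subtype.val) hu
        rw [hScoe] at this
        have : -(T (T v0)) = μ • v0 := this
        linear_combination (norm := module) -this
      have hμ : μ = ⟪T v0, T v0⟫ := by
        have h1 : ⟪(S u : E), (u : E)⟫ = μ * ⟪v0, v0⟫ := by
          rw [hu]; push_cast; rw [real_inner_smul_left]
        rw [hv0norm, mul_one] at h1
        rw [← h1, hScoe, inner_neg_left, hT, neg_neg]
      have hTv0ne : T v0 ≠ 0 := fun h => hv0ne (hinj v0 h)
      have hμpos : 0 < μ := by
        rw [hμ, real_inner_self_eq_norm_sq]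
        exact pow_pos (norm_pos_iff.mpr hTv0ne) 2
      set e0 : ℝ := Real.sqrt μ with he0def
      have he0pos : 0 < e0 := Real.sqrt_pos.mpr hμpos
      have he0sq : e0 * e0 = μ := Real.mul_self_sqrt hμpos.le
      set w0 : E := -(e0⁻¹) • T v0 with hw0def
      have hw0W : w0 ∈ W := Submodule.smul_mem _ _ (hWinv _ hv0W)
      have hTv : T v0 = -e0 • w0 := by
        rw [hw0def, smul_smul]
        rw [show -e0 * -e0⁻¹ = 1 by field_simp]
        rw [one_smul]
      have hTw : T w0 = e0 • v0 := by
        rw [hw0def, T.map_smul, hTTv0, smul_neg, smul_smul]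
        rw [show -e0⁻¹ * μ = -e0 by rw [← he0sq]; field_simp]
        module
      have hv0Tv0 : ⟪v0, T v0⟫ = 0 := by
        have h1 := hT v0 v0
        have h2 := real_inner_comm (T v0) v0
        linarith
      have hvw : ⟪v0, w0⟫ = 0 := by
        rw [hw0def, real_inner_smul_right, hv0Tv0, mul_zero]
      have hww : ⟪w0, w0⟫ = 1 := by
        rw [hw0def, real_inner_smul_left, real_inner_smul_right, ← hμ]
        rw [← he0sq]; field_simp
      -- the orthogonal complement inside W
      set W' : Submodule ℝ E := W ⊓ (Submodule.span ℝ {v0, w0})ᗮ with hW'def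
      have hmem : ∀ x : E, x ∈ W' ↔ x ∈ W ∧ ⟪v0, x⟫ = 0 ∧ ⟪w0, x⟫ = 0 := by
        intro x
        rw [hW'def, Submodule.mem_inf, Submodule.mem_orthogonal]
        constructor
        · rintro ⟨h1, h2⟩
          exact ⟨h1, h2 v0 (Submodule.subset_span (by simp)),
            h2 w0 (Submodule.subset_span (by simp))⟩
        · rintro ⟨h1, h2, h3⟩
          refine ⟨h1, fun u hu => ?_⟩
          induction hu using Submodule.span_induction with
          | mem y hy => rcases hy with rfl | rfl; exacts [h2, h3]
          | zero => simp
          | add a b _ _ ha hb => rw [inner_add_left, ha, hb, add_zero]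
          | smul c a _ ha => rw [real_inner_smul_left, ha, mul_zero]
      have hW'inv : ∀ x ∈ W', T x ∈ W' := by
        intro x hx
        rw [hmem] at hx ⊢
        obtain ⟨hxW, hxv, hxw⟩ := hx
        refine ⟨hWinv x hxW, ?_, ?_⟩
        · rw [real_inner_comm (T x) v0, hT x v0, hTv, real_inner_smul_right,
            real_inner_comm w0 x, hxw]
          ring
        · rw [real_inner_comm (T x) w0, hT x w0, hTw, real_inner_smul_right,
            real_inner_comm v0 x, hxv]
          ring
      have hv0nW' : v0 ∉ W' := by
        rw [hmem]
        rintro ⟨-, h, -⟩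
        rw [hv0norm] at h; norm_num at h
      have hlt : finrank ℝ W' < n := by
        rw [← hrank]
        exact Submodule.finrank_lt_finrank_of_lt
          (lt_of_le_of_ne inf_le_left (fun h => hv0nW' (h ▸ hv0W)))
      obtain ⟨m, e', v', w', hpos', horth', hTv', hTw', hspan'⟩ :=
        IH _ hlt W' rfl hW'inv
      have hv'W' : ∀ i, v' i ∈ W' := fun i =>
        hspan' ▸ Submodule.subset_span ⟨Sum.inl i, rfl⟩
      have hw'W' : ∀ i, w' i ∈ W' := fun i =>
        hspan' ▸ Submodule.subset_span ⟨Sum.inr i, rfl⟩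
      rw [orthonormal_iff_ite] at horth'
      -- orthogonality facts between new and old vectors
      have hv0v' : ∀ i, ⟪v0, v' i⟫ = 0 := fun i => ((hmem _).mp (hv'W' i)).2.1
      have hv0w' : ∀ i, ⟪v0, w' i⟫ = 0 := fun i => ((hmem _).mp (hw'W' i)).2.1
      have hw0v' : ∀ i, ⟪w0, v' i⟫ = 0 := fun i => ((hmem _).mp (hv'W' i)).2.2
      have hw0w' : ∀ i, ⟪w0, w' i⟫ = 0 := fun i => ((hmem _).mp (hw'W' i)).2.2
      have hv'v0 : ∀ i, ⟪v' i, v0⟫ = 0 := fun i => by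
        rw [real_inner_comm v0 (v' i)]; exact hv0v' i
      have hw'v0 : ∀ i, ⟪w' i, v0⟫ = 0 := fun i => by
        rw [real_inner_comm v0 (w' i)]; exact hv0w' i
      have hv'w0 : ∀ i, ⟪v' i, w0⟫ = 0 := fun i => by
        rw [real_inner_comm w0 (v' i)]; exact hw0v' i
      have hw'w0 : ∀ i, ⟪w' i, w0⟫ = 0 := fun i => by
        rw [real_inner_comm w0 (w' i)]; exact hw0w' i
      have hwv : ⟪w0, v0⟫ = 0 := by
        rw [real_inner_comm v0 w0]; exact hvw
      refine ⟨m + 1, Fin.cons e0 e', Fin.cons v0 v', Fin.cons w0 w', ?_, ?_, ?_, ?_, ?_⟩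
      · intro i
        induction i using Fin.cases with
        | zero => simpa using he0pos
        | succ i => simpa using hpos' i
      · rw [orthonormal_iff_ite]
        rintro (i | i) (j | j) <;>
          induction i using Fin.cases with
          | zero =>
            induction j using Fin.cases with
            | zero => simpa using by first
                | exact hv0norm
                | exact hvw
                | exact hwv
                | exact hww
                | simpa using hv0norm
                | simpa using hww
            | succ j => simp only [Sum.elim_inl, Sum.elim_inr, Fin.cons_zero, Fin.cons_succ] <;>
                simp [hv0v' j, hv0w' j, hw0v' j, hw0w' j, Fin.succ_ne_zero,
                  (Fin.succ_ne_zero j).symm]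
          | succ i =>
            induction j using Fin.cases with
            | zero => simp only [Sum.elim_inl, Sum.elim_inr, Fin.cons_zero, Fin.cons_succ] <;>
                simp [hv'v0 i, hw'v0 i, hv'w0 i, hw'w0 i, Fin.succ_ne_zero]
            | succ j => simp only [Sum.elim_inl, Sum.elim_inr, Fin.cons_zero, Fin.cons_succ] <;>
                first
                | simpa [Fin.succ_inj] using horth' (Sum.inl i) (Sum.inl j)
                | simpa [Fin.succ_inj] using horth' (Sum.inl i) (Sum.inr j)
                | simpa [Fin.succ_inj] using horth' (Sum.inr i) (Sum.inl j)
                | simpa [Fin.succ_inj] using horth' (Sum.inr i) (Sum.inr j)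
      · intro i
        induction i using Fin.cases with
        | zero => simpa using hTv
        | succ i => simpa using hTv' i
      · intro i
        induction i using Fin.cases with
        | zero => simpa using hTw
        | succ i => simpa using hTw' i
      · apply le_antisymm
        · rw [Submodule.span_le]
          rintro x ⟨(i | i), rfl⟩ <;>
            induction i using Fin.cases with
            | zero => first | exact hv0W | exact hw0W
            | succ i => first
                | exact ((hmem _).mp (hv'W' i)).1
                | exact ((hmem _).mp (hw'W' i)).1
        · intro x hx
          set r : E := x - ⟪v0, x⟫ • v0 - ⟪w0, x⟫ • w0 with hrdef
          have hrW' : r ∈ W' := by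
            rw [hmem]
            refine ⟨?_, ?_, ?_⟩
            · exact Submodule.sub_mem _ (Submodule.sub_mem _ hx
                (Submodule.smul_mem _ _ hv0W)) (Submodule.smul_mem _ _ hw0W)
            · rw [hrdef]
              simp only [inner_sub_right, real_inner_smul_right]
              rw [hv0norm, hvw]; ring
            · rw [hrdef]
              simp only [inner_sub_right, real_inner_smul_right]
              rw [hww, real_inner_comm v0 w0, hvw]; ring
          have hxr : x = ⟪v0, x⟫ • v0 + ⟪w0, x⟫ • w0 + r := by rw [hrdef]; module
          rw [hxr]
          have hsub : Set.range (Sum.elim v' w') ⊆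
              Set.range (Sum.elim (Fin.cons v0 v') (Fin.cons w0 w')) := by
            rintro y ⟨(i | i), rfl⟩
            · exact ⟨Sum.inl i.succ, by simp⟩
            · exact ⟨Sum.inr i.succ, by simp⟩
          refine Submodule.add_mem _ (Submodule.add_mem _ ?_ ?_) ?_
          · exact Submodule.smul_mem _ _ (Submodule.subset_span ⟨Sum.inl 0, by simp⟩)
          · exact Submodule.smul_mem _ _ (Submodule.subset_span ⟨Sum.inr 0, by simp⟩)
          · exact Submodule.span_mono hsub (hspan' ▸ hrW' : r ∈ Submodule.span ℝ _)

/-- Every invertible skew-symmetric real `2L × 2L` matrix `A` can be brought into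
canonical block form by an orthogonal matrix: there exist an orthogonal matrix
`V ∈ O(2L)` and a diagonal matrix `E` with strictly positive diagonal entries
such that `V * A * Vᵀ` equals the block matrix `[[0, E], [-E, 0]]`. -/
theorem skew_symmetric_canonical_form {L : ℕ} (A : Matrix (Fin (2 * L)) (Fin (2 * L)) ℝ)
    (hA : Aᵀ = -A) (hAinv : IsUnit A.det) :
    ∃ (V : Matrix (Fin (2 * L)) (Fin (2 * L)) ℝ) (e : Fin L → ℝ),
      V * Vᵀ = 1 ∧ (∀ i, 0 < e i) ∧
      V * A * Vᵀ =
        Matrix.reindex (finSumFinEquiv.trans (finCongr (by omega)))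
          (finSumFinEquiv.trans (finCongr (by omega)))
          (Matrix.fromBlocks 0 (Matrix.diagonal e) (-(Matrix.diagonal e)) 0) := by
  classical
  set T : EuclideanSpace ℝ (Fin (2*L)) →ₗ[ℝ] EuclideanSpace ℝ (Fin (2*L)) :=
    Matrix.toEuclideanLin A with hTdef
  have hTapp : ∀ (x : EuclideanSpace ℝ (Fin (2*L))) (j : Fin (2*L)),
      T x j = ∑ k, A j k * x k := by
    intro x j
    rw [hTdef, Matrix.toEuclideanLin_apply]
    rfl
  have hdotform : ∀ (x y : EuclideanSpace ℝ (Fin (2*L))),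
      ⟪x, y⟫ = ∑ k, x k * y k := by
    intro x y
    rw [PiLp.inner_apply]
    simp [RCLike.inner_apply]
    exact Finset.sum_congr rfl fun _ _ => mul_comm _ _
  have hT : ∀ x y : EuclideanSpace ℝ (Fin (2*L)), ⟪T x, y⟫ = -⟪x, T y⟫ := by
    intro x y
    rw [hdotform, hdotform]
    have h1 : ∀ j, T x j = A.mulVec (fun k => x k) j := by
      intro j; rw [hTapp]; rfl
    have h2 : ∀ j, T y j = A.mulVec (fun k => y k) j := by
      intro j; rw [hTapp]; rfl
    simp only [h1, h2]
    have : (fun k => x k) ⬝ᵥ (A *ᵥ fun k => y k)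
        = -((A *ᵥ fun k => x k) ⬝ᵥ fun k => y k) := by
      rw [Matrix.dotProduct_mulVec, ← Matrix.mulVec_transpose, hA, Matrix.neg_mulVec,
        neg_dotProduct]
    calc (∑ k, (A *ᵥ fun k => x k) k * y k) = (A *ᵥ fun k => x k) ⬝ᵥ (fun k => y k) := rfl
      _ = -((fun k => x k) ⬝ᵥ (A *ᵥ fun k => y k)) := by rw [this, neg_neg]
      _ = -∑ k, x k * (A *ᵥ fun k => y k) k := rfl
  have hinj : ∀ x : EuclideanSpace ℝ (Fin (2*L)), T x = 0 → x = 0 := by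
    intro x hx
    have hAi := Matrix.mulVec_injective_iff_isUnit.mpr ((Matrix.isUnit_iff_isUnit_det A).mpr hAinv)
    have : A.mulVec (fun k => x k) = A.mulVec 0 := by
      funext j
      rw [Matrix.mulVec_zero]
      calc (A *ᵥ fun k => x k) j = ∑ k, A j k * x k := rfl
        _ = T x j := (hTapp x j).symm
        _ = (0 : EuclideanSpace ℝ (Fin (2*L))) j := by rw [hx]
        _ = 0 := rfl
    have hx0 := hAi this
    ext j
    exact congrFun hx0 j
  obtain ⟨m, e, v, w, hpos, horth, hTv, hTw, hspan⟩ :=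
    skew_key T hT hinj (2*L) ⊤ (by rw [finrank_top, finrank_euclideanSpace_fin])
      (fun x _ => trivial)
  have hcard : m + m = 2*L := by
    have h1 := finrank_span_eq_card (R := ℝ) horth.linearIndependent
    rw [hspan, finrank_top, finrank_euclideanSpace_fin] at h1
    simpa using h1.symm
  have hmL : L = m := by omega
  subst hmL
  rw [orthonormal_iff_ite] at horth
  have hdot : ∀ s t, (∑ k, Sum.elim v w s k * Sum.elim v w t k)
      = if s = t then (1:ℝ) else 0 := by
    intro s t
    rw [← hdotform]
    exact horth s t
  set eqv : Fin L ⊕ Fin L ≃ Fin (2*L) := finSumFinEquiv.trans (finCongr (by omega)) with heqv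
  set V : Matrix (Fin (2*L)) (Fin (2*L)) ℝ :=
    Matrix.of (fun p j => Sum.elim v w (eqv.symm p) j) with hVdef
  have hVV : V * Vᵀ = 1 := by
    ext p q
    rw [Matrix.mul_apply, Matrix.one_apply]
    simp only [Matrix.transpose_apply, hVdef, Matrix.of_apply]
    rw [hdot]
    simp [EmbeddingLike.apply_eq_iff_eq]
  refine ⟨V, e, hVV, hpos, ?_⟩
  have key : ∀ s t, (∑ j, Sum.elim v w s j * (T (Sum.elim v w t)) j)
      = (Matrix.fromBlocks 0 (Matrix.diagonal e) (-(Matrix.diagonal e)) 0) s t := by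
    intro s t
    rcases t with i | i
    · rw [show T (Sum.elim v w (Sum.inl i)) = -(e i) • w i from hTv i]
      have : ∀ j, (-(e i) • w i : EuclideanSpace ℝ (Fin (2*L))) j = -(e i) * w i j :=
        fun j => rfl
      simp only [this]
      rcases s with k | k
      · have := hdot (Sum.inl k) (Sum.inr i)
        simp only [Sum.elim_inl, Sum.elim_inr] at this ⊢
        rw [show (∑ j, v k j * (-(e i) * w i j)) = -(e i) * ∑ j, v k j * w i j by
          rw [Finset.mul_sum]; exact Finset.sum_congr rfl fun j _ => by ring]
        rw [this]
        simp [Matrix.fromBlocks_apply₁₁]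
      · have := hdot (Sum.inr k) (Sum.inr i)
        simp only [Sum.elim_inl, Sum.elim_inr] at this ⊢
        rw [show (∑ j, w k j * (-(e i) * w i j)) = -(e i) * ∑ j, w k j * w i j by
          rw [Finset.mul_sum]; exact Finset.sum_congr rfl fun j _ => by ring]
        rw [this]
        rw [Matrix.fromBlocks_apply₂₁]
        simp only [Matrix.neg_apply, Matrix.diagonal_apply, Sum.inr.injEq]
        by_cases h : k = i
        · subst h; simp
        · simp [h]
    · rw [show T (Sum.elim v w (Sum.inr i)) = e i • v i from hTw i]
      have : ∀ j, (e i • v i : EuclideanSpace ℝ (Fin (2*L))) j = e i * v i j :=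
        fun j => rfl
      simp only [this]
      rcases s with k | k
      · have := hdot (Sum.inl k) (Sum.inl i)
        simp only [Sum.elim_inl, Sum.elim_inr] at this ⊢
        rw [show (∑ j, v k j * (e i * v i j)) = e i * ∑ j, v k j * v i j by
          rw [Finset.mul_sum]; exact Finset.sum_congr rfl fun j _ => by ring]
        rw [this]
        rw [Matrix.fromBlocks_apply₁₂]
        simp only [Matrix.diagonal_apply, Sum.inl.injEq]
        by_cases h : k = i
        · subst h; simp
        · simp [h]
      · have := hdot (Sum.inr k) (Sum.inl i)
        simp only [Sum.elim_inl, Sum.elim_inr] at this ⊢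
        rw [show (∑ j, w k j * (e i * v i j)) = e i * ∑ j, w k j * v i j by
          rw [Finset.mul_sum]; exact Finset.sum_congr rfl fun j _ => by ring]
        rw [this]
        simp [Matrix.fromBlocks_apply₂₂]
  have main : V * A * Vᵀ =
      Matrix.reindex eqv eqv
        (Matrix.fromBlocks 0 (Matrix.diagonal e) (-(Matrix.diagonal e)) 0) := by
    ext p q
    rw [Matrix.reindex_apply, Matrix.submatrix_apply, ← key (eqv.symm p) (eqv.symm q)]
    rw [Matrix.mul_apply]
    simp only [Matrix.mul_apply, Matrix.transpose_apply, hVdef, Matrix.of_apply,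
      Finset.sum_mul]
    rw [Finset.sum_comm]
    refine Finset.sum_congr rfl fun j _ => ?_
    rw [hTapp, Finset.mul_sum]
    refine Finset.sum_congr rfl fun k _ => by ring
  exact main
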